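/- Let k be a nonzero integer. For every C¹ function α : [0, π/2] → ℝ with α(0) = 0 and α(π/2) = π one has ∫₀^{π/2} k²·(tan s + cot s)·α′(s)²·sin²α(s) ds ≥ 8k², with equality for α(s) = 2s. In other words, the configuration with α(s) = 2s and ℓ = ±k attains the absolute minimum of the reduced σ₂-energy 16π²k²/R, matching the topological lower bound 16π²·|Q| with Hopf invariant Q = ±k². -/

import Mathlib

open Real Set intervalIntegral
open MeasureTheory

lemma tan_add_cot' {s : ℝ} (h0 : 0 < s) (h1 : s < π/2) :
    Real.tan s + Real.cot s = 2 / Real.sin (2*s) := by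
  have hs : 0 < Real.sin s := Real.sin_pos_of_pos_of_lt_pi h0 (by linarith [Real.pi_pos])
  have hc : 0 < Real.cos s := Real.cos_pos_of_mem_Ioo ⟨by linarith, h1⟩
  rw [Real.tan_eq_sin_div_cos, Real.cot_eq_cos_div_sin, Real.sin_two_mul]
  field_simp
  linear_combination Real.sin_sq_add_cos_sq s

lemma sin_lip' (a b : ℝ) : |Real.sin a - Real.sin b| ≤ |a - b| := by
  rw [Real.sin_sub_sin]
  calc |2 * Real.sin ((a-b)/2) * Real.cos ((a+b)/2)|
      = 2 * |Real.sin ((a-b)/2)| * |Real.cos ((a+b)/2)| := by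
        rw [abs_mul, abs_mul, abs_of_nonneg (by norm_num : (0:ℝ) ≤ 2)]
    _ ≤ 2 * |(a-b)/2| * 1 := by
        apply mul_le_mul _ (Real.abs_cos_le_one _) (abs_nonneg _) (by positivity)
        have := Real.abs_sin_le_abs (x := (a-b)/2)
        linarith
    _ = |a - b| := by rw [abs_div]; ring_nf

lemma integral_sin_two' : ∫ s in (0:ℝ)..(π/2), Real.sin (2*s) = 1 := by
  rw [intervalIntegral.integral_comp_mul_left Real.sin two_ne_zero]
  simp only [show (2:ℝ)*(π/2) = π by ring, mul_zero, integral_sin]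
  norm_num

lemma ftc_aux' (α : ℝ → ℝ) (hα : ContDiffOn ℝ 1 α (Icc 0 (π/2)))
    (h0 : α 0 = 0) (h1 : α (π/2) = π) :
    ∫ s in (0:ℝ)..(π/2), (derivWithin α (Icc 0 (π/2)) s) * Real.sin (α s) = 2 := by
  have hpi : (0:ℝ) < π/2 := by positivity
  have hD : ContinuousOn (derivWithin α (Icc 0 (π/2))) (Icc 0 (π/2)) :=
    hα.continuousOn_derivWithin (uniqueDiffOn_Icc hpi) le_rfl
  have hres := intervalIntegral.integral_eq_sub_of_hasDeriv_right_of_le (le_of_lt hpi)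
    (f := fun t => -Real.cos (α t))
    (f' := fun s => (derivWithin α (Icc 0 (π/2)) s) * Real.sin (α s))
    ((Real.continuous_cos.comp_continuousOn hα.continuousOn).neg)
    (fun x hx => by
      have hmem : Icc (0:ℝ) (π/2) ∈ nhds x := Icc_mem_nhds hx.1 hx.2
      have hdiff : DifferentiableAt ℝ α x :=
        ((hα.differentiableOn one_ne_zero) x (Ioo_subset_Icc_self hx)).differentiableAt hmem
      have hda : HasDerivAt α (derivWithin α (Icc 0 (π/2)) x) x := by
        rw [derivWithin_of_mem_nhds hmem]; exact hdiff.hasDerivAt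
      have h2 : HasDerivAt (fun t => -Real.cos (α t))
          ((derivWithin α (Icc 0 (π/2)) x) * Real.sin (α x)) x := by
        have := ((Real.hasDerivAt_cos (α x)).comp x hda).neg
        rw [show derivWithin α (Icc 0 (π/2)) x * Real.sin (α x)
            = -(-Real.sin (α x) * derivWithin α (Icc 0 (π/2)) x) by ring]
        exact this
      exact h2.hasDerivWithinAt)
    (((hD.mul (Real.continuous_sin.comp_continuousOn hα.continuousOn))).intervalIntegrable_of_Icc
      (le_of_lt hpi))
  rw [hres]
  norm_num [h0, h1]

lemma key_bound (k : ℤ) (α : ℝ → ℝ) (M : ℝ) (hM0 : 0 ≤ M)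
    (hM : ∀ x ∈ Icc (0:ℝ) (π/2), ‖derivWithin α (Icc 0 (π/2)) x‖ ≤ M)
    (hlip : ∀ x ∈ Icc (0:ℝ) (π/2), ∀ y ∈ Icc (0:ℝ) (π/2), |α y - α x| ≤ M * |y - x|)
    (h0 : α 0 = 0) (h1 : α (π/2) = π) :
    ∀ s ∈ Ioo (0:ℝ) (π/2),
      (k:ℝ)^2 * (Real.tan s + Real.cot s) * (derivWithin α (Icc 0 (π/2)) s)^2
        * Real.sin (α s)^2 ≤ (k:ℝ)^2 * M^4 * π^2 / 4 := by
  have hsp : (0:ℝ) < π := Real.pi_pos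
  have hpi : (0:ℝ) < π/2 := by positivity
  intro s hs
  have hsI : s ∈ Icc (0:ℝ) (π/2) := Ioo_subset_Icc_self hs
  have hu : 0 < Real.sin (2*s) :=
    Real.sin_pos_of_pos_of_lt_pi (by linarith [hs.1]) (by linarith [hs.2])
  have hb1 : |Real.sin (α s)| ≤ M * s := by
    have hl := hlip 0 ⟨le_rfl, le_of_lt hpi⟩ s hsI
    simp only [h0, sub_zero] at hl
    rw [abs_of_nonneg (le_of_lt hs.1)] at hl
    calc |Real.sin (α s)| = |Real.sin (α s) - Real.sin 0| := by rw [Real.sin_zero, sub_zero]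
      _ ≤ |α s - 0| := sin_lip' _ _
      _ = |α s| := by rw [sub_zero]
      _ ≤ M * s := hl
  have hb2 : |Real.sin (α s)| ≤ M * (π/2 - s) := by
    have hl := hlip (π/2) ⟨le_of_lt hpi, le_rfl⟩ s hsI
    have h2 : |s - π/2| = π/2 - s := by rw [abs_of_nonpos (by linarith [hs.2])]; ring
    rw [h2] at hl
    calc |Real.sin (α s)| = |Real.sin (α s) - Real.sin (α (π/2))| := by
          rw [h1, Real.sin_pi, sub_zero]
      _ ≤ |α s - α (π/2)| := sin_lip' _ _
      _ ≤ M * (π/2 - s) := hl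
  have hD2 : (derivWithin α (Icc 0 (π/2)) s)^2 ≤ M^2 := by
    have := hM s hsI
    rw [Real.norm_eq_abs] at this
    nlinarith [abs_nonneg (derivWithin α (Icc 0 (π/2)) s), sq_abs (derivWithin α (Icc 0 (π/2)) s)]
  have hp : (0:ℝ) ≤ s * (π/2 - s) :=
    mul_nonneg (le_of_lt hs.1) (by linarith [hs.2])
  have hsin2 : Real.sin (α s)^2 ≤ M^2 * (s * (π/2 - s)) := by
    have h3 : Real.sin (α s)^2 = |Real.sin (α s)| * |Real.sin (α s)| := by
      rw [← abs_mul, abs_of_nonneg (mul_self_nonneg _), ← sq]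
    rw [h3]
    calc |Real.sin (α s)| * |Real.sin (α s)| ≤ (M * s) * (M * (π/2 - s)) :=
          mul_le_mul hb1 hb2 (abs_nonneg _) (mul_nonneg hM0 (le_of_lt hs.1))
      _ = M^2 * (s * (π/2 - s)) := by ring
  have hlow : (8/π^2) * (s * (π/2 - s)) ≤ Real.sin (2*s) := by
    have c1 : 2/π * s ≤ Real.sin s := Real.mul_le_sin (le_of_lt hs.1) (le_of_lt hs.2)
    have c2 : 2/π * (π/2 - s) ≤ Real.cos s := by
      have := Real.mul_le_sin (x := π/2 - s) (by linarith [hs.2]) (by linarith [hs.1])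
      rwa [Real.sin_pi_div_two_sub] at this
    rw [Real.sin_two_mul]
    have hs2 : 0 ≤ 2/π * s := mul_nonneg (by positivity) (le_of_lt hs.1)
    have hc2 : 0 ≤ 2/π * (π/2 - s) := mul_nonneg (by positivity) (by linarith [hs.2])
    have hmm := mul_le_mul c1 c2 hc2
      (Real.sin_nonneg_of_nonneg_of_le_pi (le_of_lt hs.1) (by linarith [hs.2]))
    have heq : (8/π^2) * (s * (π/2 - s)) = 2 * ((2/π * s) * (2/π * (π/2 - s))) := by
      field_simp; ring
    nlinarith [hmm]
  rw [tan_add_cot' hs.1 hs.2,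
    show (k:ℝ)^2 * (2 / Real.sin (2*s)) * (derivWithin α (Icc 0 (π/2)) s)^2
        * Real.sin (α s)^2
      = ((k:ℝ)^2 * 2 * ((derivWithin α (Icc 0 (π/2)) s)^2 * Real.sin (α s)^2))
          / Real.sin (2*s) by ring,
    div_le_iff₀ hu]
  have e1 : (derivWithin α (Icc 0 (π/2)) s)^2 * Real.sin (α s)^2
      ≤ M^2 * (M^2 * (s * (π/2 - s))) :=
    mul_le_mul hD2 hsin2 (sq_nonneg _) (by positivity)
  have e2 : ((k:ℝ)^2 * M^4 * π^2 / 4) * ((8/π^2) * (s * (π/2 - s)))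
      ≤ ((k:ℝ)^2 * M^4 * π^2 / 4) * Real.sin (2*s) :=
    mul_le_mul_of_nonneg_left hlow (by positivity)
  have e3 : ((k:ℝ)^2 * M^4 * π^2 / 4) * ((8/π^2) * (s * (π/2 - s)))
      = 2 * (k:ℝ)^2 * M^4 * (s * (π/2 - s)) := by
    field_simp
    ring
  nlinarith [mul_le_mul_of_nonneg_left e1 (by positivity : (0:ℝ) ≤ (k:ℝ)^2 * 2)]

lemma main_ineq (k : ℤ) (α : ℝ → ℝ) (hα : ContDiffOn ℝ 1 α (Icc 0 (π/2)))
    (h0 : α 0 = 0) (h1 : α (π/2) = π) :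
    8 * (k : ℝ)^2 ≤
      ∫ s in (0:ℝ)..(π/2), (k : ℝ)^2 * (Real.tan s + Real.cot s) *
        (derivWithin α (Icc 0 (π/2)) s)^2 * Real.sin (α s)^2 := by
  have hsp : (0:ℝ) < π := Real.pi_pos
  have hpi : (0:ℝ) < π/2 := by positivity
  have hD : ContinuousOn (derivWithin α (Icc 0 (π/2))) (Icc 0 (π/2)) :=
    hα.continuousOn_derivWithin (uniqueDiffOn_Icc hpi) le_rfl
  obtain ⟨M, hM⟩ := isCompact_Icc.exists_bound_of_continuousOn hD
  have hM0 : 0 ≤ M := le_trans (norm_nonneg _) (hM 0 ⟨le_rfl, le_of_lt hpi⟩)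
  have hlip : ∀ x ∈ Icc (0:ℝ) (π/2), ∀ y ∈ Icc (0:ℝ) (π/2), |α y - α x| ≤ M * |y - x| :=
    fun x hx y hy => (convex_Icc _ _).norm_image_sub_le_of_norm_derivWithin_le
      (hα.differentiableOn one_ne_zero) hM hx hy
  have hsin2cont : Continuous (fun s : ℝ => Real.sin (2*s)) :=
    Real.continuous_sin.comp (continuous_const.mul continuous_id)
  have hsinαcont : ContinuousOn (fun s => Real.sin (α s)) (Icc 0 (π/2)) :=
    Real.continuous_sin.comp_continuousOn hα.continuousOn
  -- the lower-bound function g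
  have hg_int : IntervalIntegrable
      (fun s => 8*(k:ℝ)^2 * (derivWithin α (Icc 0 (π/2)) s * Real.sin (α s))
        - 8*(k:ℝ)^2 * Real.sin (2*s)) volume 0 (π/2) :=
    (((continuousOn_const.mul (hD.mul hsinαcont)).sub
      (continuousOn_const.mul hsin2cont.continuousOn)).intervalIntegrable_of_Icc (le_of_lt hpi))
  -- integrability of the energy density f
  have hfcont : ContinuousOn (fun s => (k : ℝ)^2 * (Real.tan s + Real.cot s) *
      (derivWithin α (Icc 0 (π/2)) s)^2 * Real.sin (α s)^2) (Ioo 0 (π/2)) := by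
    have htan : ContinuousOn Real.tan (Ioo (0:ℝ) (π/2)) := fun s hs =>
      (Real.continuousAt_tan.2 (ne_of_gt (Real.cos_pos_of_mem_Ioo
        ⟨by linarith [hs.1], hs.2⟩))).continuousWithinAt
    have hcot : ContinuousOn Real.cot (Ioo (0:ℝ) (π/2)) := by
      refine ContinuousOn.congr ((Real.continuous_cos.continuousOn).div
        (Real.continuous_sin.continuousOn) fun s hs => ne_of_gt
          (Real.sin_pos_of_pos_of_lt_pi hs.1 (by linarith [hs.2]))) ?_
      exact fun s _ => Real.cot_eq_cos_div_sin s
    exact ((continuousOn_const.mul (htan.add hcot)).mul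
        ((hD.mono Ioo_subset_Icc_self).pow 2)).mul
      ((hsinαcont.mono Ioo_subset_Icc_self).pow 2)
  have hf_int : IntervalIntegrable (fun s => (k : ℝ)^2 * (Real.tan s + Real.cot s) *
      (derivWithin α (Icc 0 (π/2)) s)^2 * Real.sin (α s)^2) volume 0 (π/2) := by
    rw [intervalIntegrable_iff_integrableOn_Ioo_of_le (le_of_lt hpi)]
    refine ⟨hfcont.aestronglyMeasurable measurableSet_Ioo, ?_⟩
    apply HasFiniteIntegral.restrict_of_bounded (C := (k:ℝ)^2 * M^4 * π^2 / 4)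
      measure_Ioo_lt_top
    rw [ae_restrict_iff' measurableSet_Ioo]
    refine ae_of_all _ fun s hs => ?_
    have hu : 0 < Real.sin (2*s) :=
      Real.sin_pos_of_pos_of_lt_pi (by linarith [hs.1]) (by linarith [hs.2])
    have hnn : 0 ≤ (k : ℝ)^2 * (Real.tan s + Real.cot s) *
        (derivWithin α (Icc 0 (π/2)) s)^2 * Real.sin (α s)^2 := by
      rw [tan_add_cot' hs.1 hs.2]
      have : 0 ≤ 2 / Real.sin (2*s) := le_of_lt (by positivity)
      positivity
    rw [Real.norm_eq_abs, abs_of_nonneg hnn]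
    exact key_bound k α M hM0 hM hlip h0 h1 s hs
  -- pointwise comparison on the closed interval
  have hle : ∀ s ∈ Icc (0:ℝ) (π/2),
      8*(k:ℝ)^2 * (derivWithin α (Icc 0 (π/2)) s * Real.sin (α s))
        - 8*(k:ℝ)^2 * Real.sin (2*s)
      ≤ (k : ℝ)^2 * (Real.tan s + Real.cot s) *
        (derivWithin α (Icc 0 (π/2)) s)^2 * Real.sin (α s)^2 := by
    intro s hs
    rcases eq_or_lt_of_le hs.1 with h|h
    · simp [← h, h0, Real.cot_eq_cos_div_sin]
    rcases eq_or_lt_of_le hs.2 with h2|h2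
    · rw [h2]
      simp [h1, Real.tan_pi_div_two, Real.cot_eq_cos_div_sin,
        show (2:ℝ)*(π/2) = π by ring]
    · have hu : 0 < Real.sin (2*s) :=
        Real.sin_pos_of_pos_of_lt_pi (by linarith) (by linarith)
      rw [tan_add_cot' h h2,
        show (k:ℝ)^2 * (2 / Real.sin (2*s)) * (derivWithin α (Icc 0 (π/2)) s)^2
            * Real.sin (α s)^2
          = ((k:ℝ)^2 * 2 * (derivWithin α (Icc 0 (π/2)) s * Real.sin (α s))^2)
              / Real.sin (2*s) by ring,
        le_div_iff₀ hu]
      nlinarith [sq_nonneg ((k:ℝ) * (derivWithin α (Icc 0 (π/2)) s * Real.sin (α s))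
        - 2*(k:ℝ)*Real.sin (2*s))]
  -- value of ∫ g
  have i1 : IntervalIntegrable
      (fun s => 8*(k:ℝ)^2 * (derivWithin α (Icc 0 (π/2)) s * Real.sin (α s))) volume 0 (π/2) :=
    (continuousOn_const.mul (hD.mul hsinαcont)).intervalIntegrable_of_Icc (le_of_lt hpi)
  have i2 : IntervalIntegrable (fun s => 8*(k:ℝ)^2 * Real.sin (2*s)) volume 0 (π/2) :=
    (continuous_const.mul hsin2cont).intervalIntegrable _ _
  have hgval : (∫ s in (0:ℝ)..(π/2),
      (8*(k:ℝ)^2 * (derivWithin α (Icc 0 (π/2)) s * Real.sin (α s))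
        - 8*(k:ℝ)^2 * Real.sin (2*s))) = 8*(k:ℝ)^2 := by
    rw [intervalIntegral.integral_sub i1 i2, intervalIntegral.integral_const_mul,
      intervalIntegral.integral_const_mul, ftc_aux' α hα h0 h1, integral_sin_two']
    ring
  calc 8 * (k : ℝ)^2
      = ∫ s in (0:ℝ)..(π/2),
          (8*(k:ℝ)^2 * (derivWithin α (Icc 0 (π/2)) s * Real.sin (α s))
            - 8*(k:ℝ)^2 * Real.sin (2*s)) := hgval.symm
    _ ≤ _ := intervalIntegral.integral_mono_on (le_of_lt hpi) hg_int hf_int hle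

lemma eq_part (k : ℤ) :
    (∫ s in (0:ℝ)..(π/2), (k : ℝ)^2 * (Real.tan s + Real.cot s) *
        (derivWithin (fun s => 2 * s) (Icc 0 (π/2)) s)^2 * Real.sin (2 * s)^2)
      = 8 * (k : ℝ)^2 := by
  have hsp : (0:ℝ) < π := Real.pi_pos
  have hpi : (0:ℝ) < π/2 := by positivity
  have hderiv2 : ∀ s ∈ Icc (0:ℝ) (π/2),
      derivWithin (fun s : ℝ => 2 * s) (Icc 0 (π/2)) s = 2 := by
    intro s hs
    have hda : HasDerivWithinAt (fun s : ℝ => 2 * s) 2 (Icc 0 (π/2)) s := by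
      simpa using ((hasDerivAt_id s).const_mul (2:ℝ)).hasDerivWithinAt
    exact hda.derivWithin (uniqueDiffOn_Icc hpi s hs)
  have hEq : EqOn
      (fun s => (k : ℝ)^2 * (Real.tan s + Real.cot s) *
        (derivWithin (fun s => 2 * s) (Icc 0 (π/2)) s)^2 * Real.sin (2 * s)^2)
      (fun s => 8*(k:ℝ)^2 * Real.sin (2*s)) (uIcc (0:ℝ) (π/2)) := by
    rw [uIcc_of_le (le_of_lt hpi)]
    intro s hs
    simp only
    rw [hderiv2 s hs]
    rcases eq_or_lt_of_le hs.1 with h|h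
    · simp [← h, Real.cot_eq_cos_div_sin]
    rcases eq_or_lt_of_le hs.2 with h2|h2
    · rw [h2]
      simp [Real.tan_pi_div_two, Real.cot_eq_cos_div_sin, show (2:ℝ)*(π/2) = π by ring]
    · have hu : 0 < Real.sin (2*s) :=
        Real.sin_pos_of_pos_of_lt_pi (by linarith) (by linarith)
      rw [tan_add_cot' h h2]
      field_simp
      ring
  rw [intervalIntegral.integral_congr hEq, intervalIntegral.integral_const_mul,
    integral_sin_two']
  ring

/-- For a nonzero integer `k`, every C¹ function `α : [0, π/2] → ℝ` with
`α(0) = 0`, `α(π/2) = π` satisfies `∫₀^{π/2} k²·(tan s + cot s)·α'(s)²·sin²α(s) ds ≥ 8k²`,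
with equality for `α(s) = 2s`; thus the configuration with `α(s) = 2s`, `l = ±k` attains
the absolute minimum `16π²k²/R` of the reduced σ₂-energy (the topological bound for
Hopf invariant `Q = ±k²`). -/
theorem stmt_6 (k : ℤ) (hk : k ≠ 0) :
    (∀ α : ℝ → ℝ, ContDiffOn ℝ 1 α (Icc 0 (π/2)) → α 0 = 0 → α (π/2) = π →
      8 * (k : ℝ)^2 ≤
        ∫ s in (0:ℝ)..(π/2), (k : ℝ)^2 * (tan s + cot s) *
          (derivWithin α (Icc 0 (π/2)) s)^2 * sin (α s)^2) ∧
    (∫ s in (0:ℝ)..(π/2), (k : ℝ)^2 * (tan s + cot s) *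
        (derivWithin (fun s => 2 * s) (Icc 0 (π/2)) s)^2 * sin (2 * s)^2)
      = 8 * (k : ℝ)^2 ∧
    ∀ R : ℝ, 0 < R → (2 * π^2 / R) * (8 * (k : ℝ)^2) = 16 * π^2 * (k : ℝ)^2 / R := by
  exact ⟨fun α hα h0 h1 => main_ineq k α hα h0 h1, eq_part k, fun R hR => by
    field_simp; ring⟩
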